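/- Let X, V, W be finite nonempty sets and let g : X × V → [−1,1], h : X × W → [−1,1] be arbitrary functions. Define f : V × W → [−1,1] by f(a,b) = (1/|X|) Σ_{x∈X} g(x,a)h(x,b). Then for every δ > 0 there exists k ≥ 1, depending only on δ (not on X, V, W, g, h), such that f is (k,δ)-stable. -/

import Mathlib

open Finset

lemma minHomog {C : Type} [Fintype C] [Nonempty C] (M : ℕ) :
    ∃ k : ℕ, ∀ (f : ℕ → ℕ → C) (S : Finset ℕ), k ≤ S.card →
      ∃ x : Fin M → ℕ, (∀ i, x i ∈ S) ∧ StrictMono x ∧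
        ∃ c : Fin M → C, ∀ s t : Fin M, s < t → f (x s) (x t) = c s := by
  classical
  induction M with
  | zero =>
      refine ⟨0, fun f S _ => ⟨Fin.elim0, fun i => i.elim0, fun i => i.elim0, Fin.elim0,
        fun s => s.elim0⟩⟩
  | succ M ih =>
      obtain ⟨k, hk⟩ := ih
      refine ⟨Fintype.card C * (k + 1) + 1, fun f S hS => ?_⟩
      have hC : 0 < Fintype.card C := Fintype.card_pos
      have hSne : S.Nonempty := by
        rw [← Finset.card_pos]; omega
      set a := S.min' hSne with ha
      set S' := S.erase a with hS'
      have hmul : Fintype.card C * k < Fintype.card C * (k + 1) :=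
        by nlinarith
      have hcard' : Fintype.card C * k < S'.card := by
        have h1 : S'.card = S.card - 1 := Finset.card_erase_of_mem (S.min'_mem hSne)
        omega
      obtain ⟨c₀, -, hc₀⟩ := Finset.exists_lt_card_fiber_of_mul_lt_card_of_maps_to
        (f := fun y => f a y) (t := (Finset.univ : Finset C))
        (fun x _ => Finset.mem_univ _) (by simpa using hcard')
      set T := S'.filter (fun y => f a y = c₀) with hT
      obtain ⟨x, hxmem, hxmono, c, hc⟩ := hk f T (by omega)
      have haT : ∀ i, a < x i := by
        intro i
        have h1 : x i ∈ S' := Finset.mem_of_mem_filter _ (hxmem i)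
        have h2 : x i ∈ S := Finset.mem_of_mem_erase h1
        have := S.min'_le _ h2
        have hne : x i ≠ a := Finset.ne_of_mem_erase h1
        omega
      refine ⟨fun i => if h : (i : ℕ) = 0 then a else x ⟨(i : ℕ) - 1, by omega⟩, ?_, ?_,
        fun s => if h : (s : ℕ) = 0 then c₀ else c ⟨(s : ℕ) - 1, by omega⟩, ?_⟩
      · intro i
        dsimp only
        split_ifs with h
        · exact S.min'_mem hSne
        · exact Finset.mem_of_mem_erase (Finset.mem_of_mem_filter _ (hxmem _))
      · intro i j hij
        have hij' : (i : ℕ) < (j : ℕ) := hij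
        dsimp only
        split_ifs with h1 h2 h2
        · omega
        · exact haT _
        · omega
        · exact hxmono (show (⟨(i:ℕ)-1, _⟩ : Fin M) < ⟨(j:ℕ)-1, _⟩ from by
            simp only [Fin.mk_lt_mk]; omega)
      · intro s t hst
        have hst' : (s : ℕ) < (t : ℕ) := hst
        dsimp only
        split_ifs with h1 h2 h2
        · omega
        · exact (Finset.mem_filter.mp (hxmem _)).2
        · omega
        · exact hc _ _ (by simp only [Fin.mk_lt_mk]; omega)
lemma homogRamsey {C : Type} [Fintype C] [Nonempty C] (m : ℕ) :
    ∃ k : ℕ, 1 ≤ k ∧ ∀ f : ℕ → ℕ → C, ∃ x : Fin m → ℕ, (∀ i, x i < k) ∧ StrictMono x ∧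
      ∀ i j i' j' : Fin m, i < j → i' < j' → f (x i) (x j) = f (x i') (x j') := by
  classical
  set M := Fintype.card C * (m + 1) + 1 with hM
  obtain ⟨k, hk⟩ := minHomog (C := C) M
  refine ⟨k + 1, by omega, fun f => ?_⟩
  obtain ⟨y, hymem, hymono, c, hc⟩ := hk f (Finset.range (k + 1))
    (by simp)
  -- pigeonhole on colors of c over Fin M
  obtain ⟨cb, -, hfib⟩ := Finset.exists_lt_card_fiber_of_mul_lt_card_of_maps_to
    (f := c) (t := (Finset.univ : Finset C)) (s := (Finset.univ : Finset (Fin M)))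
    (fun x _ => Finset.mem_univ _)
    (by
      have key : Fintype.card C * m < M :=
        lt_of_le_of_lt (Nat.mul_le_mul_left _ (Nat.le_succ m))
          (by rw [hM]; exact Nat.lt_succ_self _)
      simpa using key)
  set fib := (Finset.univ : Finset (Fin M)).filter (fun s => c s = cb) with hfibdef
  have hmle : m ≤ fib.card := by omega
  obtain ⟨t, hts, htcard⟩ := Finset.exists_subset_card_eq hmle
  set e := t.orderEmbOfFin htcard with he
  refine ⟨fun i => y (e i), fun i => ?_, ?_, ?_⟩
  · have := hymem (e i)
    simpa using this
  · intro i j hij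
    exact hymono (e.strictMono hij)
  · intro i j i' j' hij hij'
    have h1 : c (e i) = cb := by
      have := hts (t.orderEmbOfFin_mem htcard i)
      simpa [hfibdef] using this
    have h2 : c (e i') = cb := by
      have := hts (t.orderEmbOfFin_mem htcard i')
      simpa [hfibdef] using this
    rw [hc _ _ (e.strictMono hij), hc _ _ (e.strictMono hij'), h1, h2]


lemma sum_range_cast (n : ℕ) : ∑ i ∈ range n, (i : ℝ) = ((n:ℝ)^2 - n) / 2 := by
  induction n with
  | zero => simp
  | succ n ih => rw [Finset.sum_range_succ, ih]; push_cast; ring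

lemma sum_range_cast_sq (n : ℕ) :
    ∑ i ∈ range n, (i : ℝ)^2 = (2*(n:ℝ)^3 - 3*(n:ℝ)^2 + n) / 6 := by
  induction n with
  | zero => simp
  | succ n ih => rw [Finset.sum_range_succ, ih]; push_cast; ring

noncomputable def ubar (n i : ℕ) : ℝ := if i < n then 1 else -1

noncomputable def tauexp (n j : ℕ) : ℝ :=
  if j < n then 2*(j:ℝ)+1 else 4*(n:ℝ)-2*(j:ℝ)-1

noncomputable def wbar (n j : ℕ) : ℝ := tauexp n j - n

lemma sum_ubar (n : ℕ) : ∑ i ∈ range (2*n), ubar n i = 0 := by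
  rw [two_mul, Finset.sum_range_add]
  have h1 : ∀ i ∈ range n, ubar n i = 1 := fun i hi => by
    simp [ubar, Finset.mem_range.mp hi]
  have h2 : ∀ i ∈ range n, ubar n (n + i) = -1 := fun i hi => by
    simp [ubar]
  rw [Finset.sum_congr rfl h1, Finset.sum_congr rfl h2]
  simp

lemma sum_abs_ubar (n : ℕ) : ∑ i ∈ range (2*n), |ubar n i| = 2*(n:ℝ) := by
  have h1 : ∀ i ∈ range (2*n), |ubar n i| = 1 := fun i _ => by
    unfold ubar; split_ifs <;> simp
  rw [Finset.sum_congr rfl h1]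
  simp

lemma sum_sq_ubar (n : ℕ) : ∑ i ∈ range (2*n), (ubar n i)^2 = 2*(n:ℝ) := by
  have h1 : ∀ i ∈ range (2*n), (ubar n i)^2 = 1 := fun i _ => by
    unfold ubar; split_ifs <;> norm_num
  rw [Finset.sum_congr rfl h1]
  simp

lemma abs_ubar_le (n i : ℕ) : |ubar n i| ≤ 1 := by
  unfold ubar; split_ifs <;> simp

lemma pre_ubar (n j : ℕ) :
    ∑ i ∈ range j, ubar n i = if j ≤ n then (j:ℝ) else 2*(n:ℝ) - j := by
  split_ifs with h
  · have h1 : ∀ i ∈ range j, ubar n i = 1 := fun i hi => by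
      have := Finset.mem_range.mp hi; simp [ubar]; omega
    rw [Finset.sum_congr rfl h1]; simp
  · have hn : n ≤ j := by omega
    obtain ⟨d, rfl⟩ : ∃ d, j = n + d := ⟨j - n, by omega⟩
    rw [Finset.sum_range_add]
    have h1 : ∀ i ∈ range n, ubar n i = 1 := fun i hi => by
      have := Finset.mem_range.mp hi; simp [ubar, this]
    have h2 : ∀ i ∈ range d, ubar n (n + i) = -1 := fun i hi => by simp [ubar]
    rw [Finset.sum_congr rfl h1, Finset.sum_congr rfl h2]
    simp; push_cast; ring

lemma wbar_second (n j : ℕ) : wbar n (n + j) = (n:ℝ) - 2*j - 1 := by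
  unfold wbar tauexp
  have hlt : ¬ (n + j < n) := by omega
  simp only [hlt, if_false]; push_cast; ring

lemma wbar_first (n j : ℕ) (h : j < n) : wbar n j = 2*(j:ℝ) + 1 - n := by
  unfold wbar tauexp; simp [h]

lemma sum_wbar (n : ℕ) : ∑ j ∈ range (2*n), wbar n j = 0 := by
  rw [two_mul, Finset.sum_range_add]
  rw [Finset.sum_congr rfl (fun j hj => wbar_first n j (Finset.mem_range.mp hj)),
    Finset.sum_congr rfl (fun j _ => wbar_second n j)]
  rw [← Finset.sum_add_distrib]
  have : ∀ x ∈ range n, (2*(x:ℝ)+1-n) + ((n:ℝ)-2*x-1) = 0 := fun x _ => by ring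
  rw [Finset.sum_congr rfl this, Finset.sum_const_zero]

lemma sum_sq_wbar (n : ℕ) :
    ∑ j ∈ range (2*n), (wbar n j)^2 = 2*((n:ℝ)^3 - n)/3 := by
  have e1 : ∀ j ∈ range n, (2*(j:ℝ)+1-(n:ℝ))^2
      = 4*(j:ℝ)^2 + (4-4*(n:ℝ))*(j:ℝ) + (1-(n:ℝ))^2 := fun j _ => by ring
  have key : ∑ j ∈ range n, (2*(j:ℝ)+1-(n:ℝ))^2 = ((n:ℝ)^3 - n)/3 := by
    rw [Finset.sum_congr rfl e1, Finset.sum_add_distrib, Finset.sum_add_distrib,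
      ← Finset.mul_sum, ← Finset.mul_sum, sum_range_cast, sum_range_cast_sq,
      Finset.sum_const, Finset.card_range]
    push_cast; ring
  have A : ∑ j ∈ range n, (wbar n j)^2 = ((n:ℝ)^3 - n)/3 := by
    rw [Finset.sum_congr rfl (fun j hj => by
      rw [wbar_first n j (Finset.mem_range.mp hj)]), key]
  have B : ∑ j ∈ range n, (wbar n (n + j))^2 = ((n:ℝ)^3 - n)/3 := by
    have e2 : ∀ j ∈ range n, (wbar n (n+j))^2 = (2*(j:ℝ)+1-(n:ℝ))^2 := fun j _ => by
      rw [wbar_second]; ring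
    rw [Finset.sum_congr rfl e2, key]
  rw [two_mul, Finset.sum_range_add, A, B]; ring

lemma abs_wbar_le (n j : ℕ) (hj : j < 2*n) : |wbar n j| ≤ (n:ℝ) := by
  rcases lt_or_ge j n with h | h
  · have hj1 : (j:ℝ) + 1 ≤ (n:ℝ) := by exact_mod_cast Nat.succ_le_of_lt h
    have hj0 : (0:ℝ) ≤ (j:ℝ) := Nat.cast_nonneg j
    rw [wbar_first n j h, abs_le]
    constructor <;> nlinarith
  · obtain ⟨d, rfl⟩ : ∃ d, j = n + d := ⟨j - n, by omega⟩
    have hd : d < n := by omega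
    have hd1 : (d:ℝ) + 1 ≤ (n:ℝ) := by exact_mod_cast Nat.succ_le_of_lt hd
    have hd0 : (0:ℝ) ≤ (d:ℝ) := Nat.cast_nonneg d
    rw [wbar_second, abs_le]
    constructor <;> nlinarith

lemma tau_eval (n j : ℕ) (hj : j < 2*n) :
    2 * (∑ i ∈ range j, ubar n i) + ubar n j = tauexp n j := by
  rw [pre_ubar]
  unfold ubar tauexp
  by_cases h : j < n
  · rw [if_pos (by omega : j ≤ n), if_pos h, if_pos h]
  · by_cases h2 : j = n
    · subst h2
      simp only [le_refl, if_true, h, if_false]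
      ring
    · rw [if_neg (by omega : ¬ j ≤ n), if_neg h, if_neg h]; ring

noncomputable def Tsgn (i j : ℕ) : ℝ := if i < j then 1 else if j < i then -1 else 0

lemma Tsum (n j : ℕ) (hj : j < 2*n) :
    ∑ i ∈ range (2*n), ubar n i * Tsgn i j = tauexp n j := by
  obtain ⟨d, hd⟩ : ∃ d, 2*n = (j+1) + d := ⟨2*n - (j+1), by omega⟩
  have hsub : ∑ i ∈ range d, ubar n (j+1+i) = - (∑ i ∈ range j, ubar n i + ubar n j) := by
    have h0 := sum_ubar n
    rw [hd, Finset.sum_range_add, Finset.sum_range_succ] at h0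
    linarith
  rw [hd, Finset.sum_range_add, Finset.sum_range_succ]
  have e1 : ∀ i ∈ range j, ubar n i * Tsgn i j = ubar n i := fun i hi => by
    have := Finset.mem_range.mp hi
    simp [Tsgn, this]
  have e2 : ubar n j * Tsgn j j = 0 := by simp [Tsgn]
  have e3 : ∀ i ∈ range d, ubar n (j+1+i) * Tsgn (j+1+i) j = - ubar n (j+1+i) := fun i _ => by
    have h1 : ¬ (j+1+i < j) := by omega
    have h2 : j < j+1+i := by omega
    simp [Tsgn, h1, h2]
  rw [Finset.sum_congr rfl e1, e2, Finset.sum_congr rfl e3, Finset.sum_neg_distrib, hsub]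
  rw [← tau_eval n j hj]
  ring

lemma bilinSwap {α β γ : Type*} (A : Finset α) (B : Finset β) (Γ : Finset γ)
    (u : α → ℝ) (w : β → ℝ) (G : α → γ → ℝ) (H : β → γ → ℝ) :
    ∑ i ∈ A, ∑ j ∈ B, u i * w j * (∑ x ∈ Γ, G i x * H j x)
      = ∑ x ∈ Γ, (∑ i ∈ A, u i * G i x) * (∑ j ∈ B, w j * H j x) := by
  have L : ∑ i ∈ A, ∑ j ∈ B, u i * w j * (∑ x ∈ Γ, G i x * H j x)
      = ∑ i ∈ A, ∑ j ∈ B, ∑ x ∈ Γ, (u i * G i x) * (w j * H j x) := by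
    refine Finset.sum_congr rfl fun i _ => Finset.sum_congr rfl fun j _ => ?_
    rw [Finset.mul_sum]
    exact Finset.sum_congr rfl fun x _ => by ring
  have R : ∑ x ∈ Γ, (∑ i ∈ A, u i * G i x) * (∑ j ∈ B, w j * H j x)
      = ∑ x ∈ Γ, ∑ i ∈ A, ∑ j ∈ B, (u i * G i x) * (w j * H j x) :=
    Finset.sum_congr rfl fun x _ => Finset.sum_mul_sum _ _ _ _
  rw [L, R]
  calc ∑ i ∈ A, ∑ j ∈ B, ∑ x ∈ Γ, (u i * G i x) * (w j * H j x)
      = ∑ i ∈ A, ∑ x ∈ Γ, ∑ j ∈ B, (u i * G i x) * (w j * H j x) :=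
        Finset.sum_congr rfl fun i _ => Finset.sum_comm
    _ = ∑ x ∈ Γ, ∑ i ∈ A, ∑ j ∈ B, (u i * G i x) * (w j * H j x) := Finset.sum_comm

lemma abs_double_sum_le (m : ℕ) (F B : ℕ → ℕ → ℝ)
    (h : ∀ i ∈ range m, ∀ j ∈ range m, |F i j| ≤ B i j) :
    |∑ i ∈ range m, ∑ j ∈ range m, F i j| ≤ ∑ i ∈ range m, ∑ j ∈ range m, B i j := by
  refine (Finset.abs_sum_le_sum_abs _ _).trans (Finset.sum_le_sum fun i hi => ?_)
  exact (Finset.abs_sum_le_sum_abs _ _).trans (Finset.sum_le_sum fun j hj => h i hi j hj)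

lemma gram_bound {X : Type} [Fintype X] (N : ℝ) (hN : 0 < N) (m : ℕ) (v : ℕ → ℝ)
    (F : ℕ → X → ℝ) (Pq : ℕ → ℕ → ℝ) (γ₀ μ Sv Qv : ℝ) (hμ : 0 ≤ μ)
    (hP : ∀ i j, i < m → j < m → Pq i j = (∑ x : X, F i x * F j x)/N)
    (hdiag : ∀ i, i < m → |Pq i i - γ₀| ≤ 2)
    (hoff : ∀ i j, i < m → j < m → i ≠ j → |Pq i j - γ₀| ≤ μ)
    (hzero : ∑ i ∈ range m, v i = 0)
    (habs : ∑ i ∈ range m, |v i| ≤ Sv)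
    (hsq : ∑ i ∈ range m, (v i)^2 ≤ Qv) :
    ∑ x : X, (∑ i ∈ range m, v i * F i x)^2 ≤ N * (μ * Sv^2 + 2*Qv) := by
  have habs0 : 0 ≤ ∑ i ∈ range m, |v i| := Finset.sum_nonneg fun i _ => abs_nonneg _
  have hsq0 : 0 ≤ ∑ i ∈ range m, (v i)^2 := Finset.sum_nonneg fun i _ => sq_nonneg _
  have hSv0 : 0 ≤ Sv := le_trans habs0 habs
  have key : ∑ x : X, (∑ i ∈ range m, v i * F i x)^2
      = N * ∑ i ∈ range m, ∑ j ∈ range m, v i * v j * Pq i j := by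
    have e1 : ∀ x : X, (∑ i ∈ range m, v i * F i x)^2
        = (∑ i ∈ range m, v i * F i x) * (∑ j ∈ range m, v j * F j x) := fun x => sq _
    rw [Finset.sum_congr rfl (fun x _ => e1 x), ← bilinSwap, Finset.mul_sum]
    refine Finset.sum_congr rfl fun i hi => ?_
    rw [Finset.mul_sum]
    refine Finset.sum_congr rfl fun j hj => ?_
    rw [hP i j (Finset.mem_range.mp hi) (Finset.mem_range.mp hj)]
    field_simp
  rw [key]
  have main : ∑ i ∈ range m, ∑ j ∈ range m, v i * v j * Pq i j ≤ μ * Sv^2 + 2*Qv := by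
    have inner0 : ∀ i ∈ range m, ∑ j ∈ range m, v i * v j * γ₀ = 0 := fun i _ => by
      have e : ∀ j ∈ range m, v i * v j * γ₀ = (v i * γ₀) * v j := fun j _ => by ring
      rw [Finset.sum_congr rfl e, ← Finset.mul_sum, hzero, mul_zero]
    have dec : ∑ i ∈ range m, ∑ j ∈ range m, v i * v j * Pq i j
        = ∑ i ∈ range m, ∑ j ∈ range m, v i * v j * (Pq i j - γ₀) := by
      refine Finset.sum_congr rfl fun i hi => ?_
      have e : ∀ j ∈ range m, v i * v j * Pq i j
          = v i * v j * (Pq i j - γ₀) + v i * v j * γ₀ := fun j _ => by ring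
      rw [Finset.sum_congr rfl e, Finset.sum_add_distrib, inner0 i hi, add_zero]
    rw [dec]
    have step1 : ∑ i ∈ range m, ∑ j ∈ range m, v i * v j * (Pq i j - γ₀)
        ≤ ∑ i ∈ range m, ∑ j ∈ range m, |v i| * |v j| * (if i = j then 2 else μ) := by
      refine Finset.sum_le_sum fun i hi => Finset.sum_le_sum fun j hj => ?_
      have h1 : v i * v j * (Pq i j - γ₀) ≤ |v i * v j * (Pq i j - γ₀)| := le_abs_self _
      rw [abs_mul, abs_mul] at h1
      refine h1.trans ?_
      refine mul_le_mul_of_nonneg_left ?_ (mul_nonneg (abs_nonneg _) (abs_nonneg _))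
      split_ifs with hij
      · subst hij; exact hdiag i (Finset.mem_range.mp hi)
      · exact hoff i j (Finset.mem_range.mp hi) (Finset.mem_range.mp hj) hij
    refine step1.trans ?_
    have split : ∀ i ∈ range m,
        (∑ j ∈ range m, |v i| * |v j| * (if i = j then 2 else μ))
        = (∑ j ∈ range m, |v i| * |v j| * μ)
          + (∑ j ∈ range m, if i = j then |v i| * |v j| * (2 - μ) else 0) := by
      intro i _
      rw [← Finset.sum_add_distrib]
      refine Finset.sum_congr rfl fun j _ => ?_
      split_ifs <;> ring
    rw [Finset.sum_congr rfl split, Finset.sum_add_distrib]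
    have eS1 : (∑ i ∈ range m, ∑ j ∈ range m, |v i| * |v j| * μ)
        = (∑ i ∈ range m, |v i|) * (∑ j ∈ range m, |v j|) * μ := by
      rw [Finset.sum_mul_sum (f := fun i => |v i|) (g := fun j => |v j|), Finset.sum_mul]
      exact Finset.sum_congr rfl fun i _ => by rw [Finset.sum_mul]
    have eS2 : (∑ i ∈ range m, ∑ j ∈ range m, if i = j then |v i| * |v j| * (2 - μ) else 0)
        = ∑ i ∈ range m, (v i)^2 * (2 - μ) := by
      refine Finset.sum_congr rfl fun i hi => ?_
      rw [Finset.sum_ite_eq]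
      simp only [hi, if_true]
      rw [← abs_mul, abs_mul_self, ← sq]
    rw [eS1, eS2]
    have b1 : (∑ i ∈ range m, |v i|) * (∑ j ∈ range m, |v j|) * μ ≤ Sv * Sv * μ := by
      have := mul_le_mul habs habs habs0 hSv0
      nlinarith
    have b2 : ∑ i ∈ range m, (v i)^2 * (2 - μ) ≤ 2 * Qv := by
      have t1 : ∑ i ∈ range m, (v i)^2 * (2 - μ) ≤ ∑ i ∈ range m, (v i)^2 * 2 :=
        Finset.sum_le_sum fun i _ => mul_le_mul_of_nonneg_left (by linarith) (sq_nonneg _)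
      have t2 : ∑ i ∈ range m, (v i)^2 * 2 = (∑ i ∈ range m, (v i)^2) * 2 := by
        rw [Finset.sum_mul]
      nlinarith [hsq]
    nlinarith
  nlinarith [main, hN.le, mul_le_mul_of_nonneg_left main hN.le]

noncomputable def colF (n : ℕ) (r : ℝ) : Fin (4*n^2+1) :=
  ⟨min ⌊(r+2)*(n:ℝ)^2⌋₊ (4*n^2), by omega⟩

lemma colF_prop (n : ℕ) (hn : 0 < n) (r s : ℝ) (hr : |r| ≤ 2) (hs : |s| ≤ 2)
    (hc : colF n r = colF n s) : |r - s| ≤ 1/(n:ℝ)^2 := by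
  have hn2 : (0:ℝ) < (n:ℝ)^2 := by positivity
  have hfl : ∀ t : ℝ, |t| ≤ 2 → min ⌊(t+2)*(n:ℝ)^2⌋₊ (4*n^2) = ⌊(t+2)*(n:ℝ)^2⌋₊ := by
    intro t ht
    refine min_eq_left ?_
    have h1 : (t+2)*(n:ℝ)^2 ≤ ((4*n^2 : ℕ) : ℝ) := by
      have := abs_le.mp ht
      push_cast
      nlinarith
    calc ⌊(t+2)*(n:ℝ)^2⌋₊ ≤ ⌊((4*n^2 : ℕ):ℝ)⌋₊ := Nat.floor_le_floor h1
      _ = 4*n^2 := Nat.floor_natCast _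
  have hval : (⌊(r+2)*(n:ℝ)^2⌋₊ : ℕ) = ⌊(s+2)*(n:ℝ)^2⌋₊ := by
    have := congrArg Fin.val hc
    simpa [colF, hfl r hr, hfl s hs] using this
  have hrpos : (0:ℝ) ≤ (r+2)*(n:ℝ)^2 := by
    have := abs_le.mp hr; nlinarith
  have hspos : (0:ℝ) ≤ (s+2)*(n:ℝ)^2 := by
    have := abs_le.mp hs; nlinarith
  have l1 : (⌊(r+2)*(n:ℝ)^2⌋₊ : ℝ) ≤ (r+2)*(n:ℝ)^2 := Nat.floor_le hrpos
  have l2 : (r+2)*(n:ℝ)^2 < ⌊(r+2)*(n:ℝ)^2⌋₊ + 1 := Nat.lt_floor_add_one _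
  have l3 : (⌊(s+2)*(n:ℝ)^2⌋₊ : ℝ) ≤ (s+2)*(n:ℝ)^2 := Nat.floor_le hspos
  have l4 : (s+2)*(n:ℝ)^2 < ⌊(s+2)*(n:ℝ)^2⌋₊ + 1 := Nat.lt_floor_add_one _
  have hcast : (⌊(r+2)*(n:ℝ)^2⌋₊ : ℝ) = (⌊(s+2)*(n:ℝ)^2⌋₊ : ℝ) := by exact_mod_cast hval
  have key1 : (r-s)*(n:ℝ)^2 < 1 := by nlinarith
  have key2 : (s-r)*(n:ℝ)^2 < 1 := by nlinarith
  have b1 : r - s ≤ 1/(n:ℝ)^2 := by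
    rw [le_div_iff₀ hn2]; linarith
  have b2 : s - r ≤ 1/(n:ℝ)^2 := by
    rw [le_div_iff₀ hn2]; linarith
  rw [abs_le]
  constructor <;> linarith


set_option maxHeartbeats 8000000


/-- For every `δ > 0` there is `k ≥ 1` such that for all finite nonempty `X`, `V`, `W`
and all `[-1,1]`-valued `g : X × V → ℝ`, `h : X × W → ℝ`, the averaged product function
`f(a,b) = (1/|X|) Σ_x g(x,a) h(x,b)` is `(k,δ)`-stable. -/
theorem averaged_product_stable (δ : ℝ) (hδ : 0 < δ) :
    ∃ k : ℕ, 1 ≤ k ∧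
      ∀ (X V W : Type) [Fintype X] [Nonempty X] [Fintype V] [Nonempty V]
        [Fintype W] [Nonempty W] (g : X → V → ℝ) (h : X → W → ℝ),
        (∀ x a, g x a ∈ Set.Icc (-1:ℝ) 1) →
        (∀ x b, h x b ∈ Set.Icc (-1:ℝ) 1) →
        ¬ ∃ (a : Fin k → V) (b : Fin k → W), ∀ i j : Fin k, i < j →
          δ ≤ |(∑ x : X, g x (a i) * h x (b j)) / (Fintype.card X : ℝ) -
               (∑ x : X, g x (a j) * h x (b i)) / (Fintype.card X : ℝ)| := by
  classical
  set δ' := min δ 2 with hδ'def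
  have hδ'pos : 0 < δ' := lt_min hδ two_pos
  have hδ'le2 : δ' ≤ 2 := min_le_right _ _
  have hδ'leδ : δ' ≤ δ := min_le_left _ _
  set n : ℕ := ⌈(32:ℝ)/δ'⌉₊ + 4 with hndef
  have hn4 : 4 ≤ n := by omega
  have hnR : (4:ℝ) ≤ (n:ℝ) := by exact_mod_cast hn4
  have hnpos : (0:ℝ) < (n:ℝ) := by linarith
  have hδn : (32:ℝ) ≤ δ' * n := by
    have h1 : (32:ℝ)/δ' ≤ (⌈(32:ℝ)/δ'⌉₊ : ℝ) := Nat.le_ceil _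
    have h2 : ((⌈(32:ℝ)/δ'⌉₊ : ℕ) : ℝ) ≤ (n:ℝ) := by
      rw [hndef]; push_cast; linarith
    have h3 : (32:ℝ)/δ' ≤ (n:ℝ) := le_trans h1 h2
    calc (32:ℝ) = δ' * (32/δ') := by field_simp
      _ ≤ δ' * n := mul_le_mul_of_nonneg_left h3 hδ'pos.le
  set μ : ℝ := 1/(n:ℝ)^2 with hμdef
  have hμ0 : (0:ℝ) ≤ μ := by positivity
  have hμn2 : μ * (n:ℝ)^2 = 1 := by
    rw [hμdef]; field_simp
  obtain ⟨k, hk1, hkRam⟩ := homogRamsey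
    (C := Fin (4*n^2+1) × Fin (4*n^2+1) × Fin (4*n^2+1)) (2*n)
  refine ⟨k, hk1, ?_⟩
  intro X V W _ _ _ _ _ _ g hfun hgB hhB
  rintro ⟨a, b, hab⟩
  have hNpos : (0:ℝ) < (Fintype.card X : ℝ) := by
    exact_mod_cast Fintype.card_pos
  set N := (Fintype.card X : ℝ) with hNdef
  have h0k : 0 < k := hk1
  set A : ℕ → V := fun i => a (if hi : i < k then ⟨i, hi⟩ else ⟨0, h0k⟩) with hAdef
  set B : ℕ → W := fun i => b (if hi : i < k then ⟨i, hi⟩ else ⟨0, h0k⟩) with hBdef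
  set Pg : ℕ → ℕ → ℝ := fun i j => (∑ x : X, g x (A i) * g x (A j)) / N with hPgdef
  set Ph : ℕ → ℕ → ℝ := fun i j => (∑ x : X, hfun x (B i) * hfun x (B j)) / N with hPhdef
  set Fd : ℕ → ℕ → ℝ := fun i j => (∑ x : X, g x (A i) * hfun x (B j)) / N
      - (∑ x : X, g x (A j) * hfun x (B i)) / N with hFddef
  have hgab : ∀ x v, |g x v| ≤ 1 := fun x v => abs_le.mpr ⟨(hgB x v).1, (hgB x v).2⟩
  have hhab : ∀ x w0, |hfun x w0| ≤ 1 := fun x w0 => abs_le.mpr ⟨(hhB x w0).1, (hhB x w0).2⟩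
  have habs1 : ∀ (p q : X → ℝ), (∀ x, |p x| ≤ 1) → (∀ x, |q x| ≤ 1) →
      |(∑ x : X, p x * q x)/N| ≤ 1 := by
    intro p q hp hq
    rw [abs_div, abs_of_pos hNpos, div_le_one hNpos]
    calc |∑ x : X, p x * q x| ≤ ∑ x : X, |p x * q x| := Finset.abs_sum_le_sum_abs _ _
      _ ≤ ∑ _x : X, (1:ℝ) := Finset.sum_le_sum fun x _ => by
          calc |p x * q x| = |p x| * |q x| := abs_mul _ _
            _ ≤ 1 * 1 := mul_le_mul (hp x) (hq x) (abs_nonneg _) zero_le_one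
            _ = 1 := one_mul 1
      _ = N := by rw [Finset.sum_const, Finset.card_univ, hNdef, nsmul_eq_mul, mul_one]
  have hPgle : ∀ p q, |Pg p q| ≤ 1 := fun p q =>
    habs1 _ _ (fun x => hgab x _) (fun x => hgab x _)
  have hPhle : ∀ p q, |Ph p q| ≤ 1 := fun p q =>
    habs1 _ _ (fun x => hhab x _) (fun x => hhab x _)
  have hFdle : ∀ p q, |Fd p q| ≤ 2 := by
    intro p q
    have h1 := habs1 (fun x => g x (A p)) (fun x => hfun x (B q))
      (fun x => hgab x _) (fun x => hhab x _)
    have h2 := habs1 (fun x => g x (A q)) (fun x => hfun x (B p))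
      (fun x => hgab x _) (fun x => hhab x _)
    calc |Fd p q| ≤ |(∑ x : X, g x (A p) * hfun x (B q))/N|
        + |(∑ x : X, g x (A q) * hfun x (B p))/N| := abs_sub _ _
      _ ≤ 2 := by linarith
  set f : ℕ → ℕ → (Fin (4*n^2+1) × Fin (4*n^2+1) × Fin (4*n^2+1)) :=
    fun i j => (colF n (Pg i j), colF n (Ph i j), colF n (Fd i j)) with hfdef
  obtain ⟨xx, hxlt, hxmono, hxhom⟩ := hkRam f
  have h02n : 0 < 2*n := by omega
  set φ : ℕ → ℕ := fun i => (xx (if hi : i < 2*n then ⟨i, hi⟩ else ⟨0, h02n⟩) : ℕ) with hφdef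
  have hφeq : ∀ i (hi : i < 2*n), φ i = xx ⟨i, hi⟩ := fun i hi => by
    simp only [hφdef, dif_pos hi]
  have hφlt : ∀ i, φ i < k := fun i => by
    simp only [hφdef]; exact hxlt _
  have hφmono : ∀ i j, i < j → j < 2*n → φ i < φ j := by
    intro i j hij hj
    rw [hφeq i (by omega), hφeq j hj]
    exact hxmono (Fin.mk_lt_mk.mpr hij)
  have hhom : ∀ i j i' j' : ℕ, i < j → j < 2*n → i' < j' → j' < 2*n →
      f (φ i) (φ j) = f (φ i') (φ j') := by
    intro i j i' j' h1 h2 h3 h4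
    rw [hφeq i (by omega), hφeq j h2, hφeq i' (by omega), hφeq j' h4]
    exact hxhom _ _ _ _ (Fin.mk_lt_mk.mpr h1) (Fin.mk_lt_mk.mpr h3)
  have hcomp : ∀ i j i' j' : ℕ, i < j → j < 2*n → i' < j' → j' < 2*n →
      colF n (Pg (φ i) (φ j)) = colF n (Pg (φ i') (φ j'))
      ∧ colF n (Ph (φ i) (φ j)) = colF n (Ph (φ i') (φ j'))
      ∧ colF n (Fd (φ i) (φ j)) = colF n (Fd (φ i') (φ j')) := by
    intro i j i' j' h1 h2 h3 h4
    have := hhom i j i' j' h1 h2 h3 h4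
    simp only [hfdef] at this
    exact ⟨congrArg (fun p => p.1) this, congrArg (fun p => p.2.1) this,
      congrArg (fun p => p.2.2) this⟩
  have hPgnear : ∀ i j i' j' : ℕ, i < j → j < 2*n → i' < j' → j' < 2*n →
      |Pg (φ i) (φ j) - Pg (φ i') (φ j')| ≤ μ := by
    intro i j i' j' h1 h2 h3 h4
    have hc := (hcomp i j i' j' h1 h2 h3 h4).1
    have := colF_prop n (by omega) _ _ ((hPgle _ _).trans one_le_two)
      ((hPgle _ _).trans one_le_two) hc
    rwa [← hμdef] at this
  have hPhnear : ∀ i j i' j' : ℕ, i < j → j < 2*n → i' < j' → j' < 2*n →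
      |Ph (φ i) (φ j) - Ph (φ i') (φ j')| ≤ μ := by
    intro i j i' j' h1 h2 h3 h4
    have hc := (hcomp i j i' j' h1 h2 h3 h4).2.1
    have := colF_prop n (by omega) _ _ (hPhle _ _ |>.trans one_le_two)
      (hPhle _ _ |>.trans one_le_two) hc
    rwa [← hμdef] at this
  have hFdnear : ∀ i j i' j' : ℕ, i < j → j < 2*n → i' < j' → j' < 2*n →
      |Fd (φ i) (φ j) - Fd (φ i') (φ j')| ≤ μ := by
    intro i j i' j' h1 h2 h3 h4
    have hc := (hcomp i j i' j' h1 h2 h3 h4).2.2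
    have := colF_prop n (by omega) _ _ (hFdle _ _) (hFdle _ _) hc
    rwa [← hμdef] at this
  -- the selected row functions
  set Gf : ℕ → X → ℝ := fun i y => g y (A (φ i)) with hGfdef
  set Hf : ℕ → X → ℝ := fun j y => hfun y (B (φ j)) with hHfdef
  set Dd : ℕ → ℕ → ℝ := fun i j => Fd (φ i) (φ j) with hDddef
  have hDdalt : ∀ i j, Dd i j = (∑ y : X, Gf i y * Hf j y)/N - (∑ y : X, Gf j y * Hf i y)/N := by
    intro i j
    simp only [hDddef, hFddef, hGfdef, hHfdef]
  have hDanti : ∀ i j, Dd i j = - Dd j i := by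
    intro i j
    rw [hDdalt, hDdalt]; ring
  have hDdiag : ∀ i, Dd i i = 0 := by
    intro i
    rw [hDdalt]; ring
  have hDlow : ∀ i j, i < j → j < 2*n → δ' ≤ |Dd i j| := by
    intro i j h1 h2
    have hij : φ i < φ j := hφmono i j h1 h2
    have hd := hab ⟨φ i, hφlt i⟩ ⟨φ j, hφlt j⟩ (Fin.mk_lt_mk.mpr hij)
    have hA1 : A (φ i) = a ⟨φ i, hφlt i⟩ := by
      simp only [hAdef]; rw [dif_pos (hφlt i)]
    have hA2 : A (φ j) = a ⟨φ j, hφlt j⟩ := by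
      simp only [hAdef]; rw [dif_pos (hφlt j)]
    have hB1 : B (φ i) = b ⟨φ i, hφlt i⟩ := by
      simp only [hBdef]; rw [dif_pos (hφlt i)]
    have hB2 : B (φ j) = b ⟨φ j, hφlt j⟩ := by
      simp only [hBdef]; rw [dif_pos (hφlt j)]
    have : Dd i j = (∑ x : X, g x (a ⟨φ i, hφlt i⟩) * hfun x (b ⟨φ j, hφlt j⟩))/N
        - (∑ x : X, g x (a ⟨φ j, hφlt j⟩) * hfun x (b ⟨φ i, hφlt i⟩))/N := by
      simp only [hDddef, hFddef, hA1, hA2, hB1, hB2]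
    rw [this]
    exact le_trans hδ'leδ hd
  set D₀ : ℝ := Dd 0 1 with hD₀def
  have h12n : 1 < 2*n := by omega
  have hD₀ : δ' ≤ |D₀| := hDlow 0 1 one_pos h12n
  have hDnear : ∀ i j, i < j → j < 2*n → |Dd i j - D₀| ≤ μ := by
    intro i j h1 h2
    exact hFdnear i j 0 1 h1 h2 one_pos h12n
  have hTermBound : ∀ i j, i < 2*n → j < 2*n → |Dd i j - D₀ * Tsgn i j| ≤ μ := by
    intro i j h1 h2
    rcases lt_trichotomy i j with h | h | h
    · rw [show Tsgn i j = 1 from by simp [Tsgn, h], mul_one]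
      exact hDnear i j h h2
    · subst h
      rw [show Tsgn i i = 0 from by simp [Tsgn], mul_zero, hDdiag, sub_zero, abs_zero]
      exact hμ0
    · rw [show Tsgn i j = -1 from by
        simp only [Tsgn, if_neg (by omega : ¬ i < j), if_pos h]]
      rw [hDanti i j]
      have : -Dd j i - D₀ * (-1) = -(Dd j i - D₀) := by ring
      rw [this, abs_neg]
      exact hDnear j i h h1
  -- symmetric Gram entries
  have hPgsymm : ∀ p q, Pg p q = Pg q p := fun p q => by
    simp only [hPgdef]
    congr 1
    exact Finset.sum_congr rfl fun x _ => mul_comm _ _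
  have hPhsymm : ∀ p q, Ph p q = Ph q p := fun p q => by
    simp only [hPhdef]
    congr 1
    exact Finset.sum_congr rfl fun x _ => mul_comm _ _
  have habs_w : ∑ j ∈ range (2*n), |wbar n j| ≤ 2*(n:ℝ)^2 := by
    calc ∑ j ∈ range (2*n), |wbar n j| ≤ ∑ _j ∈ range (2*n), (n:ℝ) :=
          Finset.sum_le_sum fun j hj => abs_wbar_le n j (Finset.mem_range.mp hj)
      _ = 2*(n:ℝ)^2 := by
          rw [Finset.sum_const, Finset.card_range, nsmul_eq_mul]; push_cast; ring
  -- Gram bounds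
  have g1 : ∑ y : X, (∑ i ∈ range (2*n), ubar n i * Gf i y)^2
      ≤ N * (μ * (2*(n:ℝ))^2 + 2*(2*(n:ℝ))) := by
    refine gram_bound N hNpos (2*n) (ubar n) Gf (fun i j => Pg (φ i) (φ j))
      (Pg (φ 0) (φ 1)) μ (2*(n:ℝ)) (2*(n:ℝ)) hμ0 ?_ ?_ ?_
      (sum_ubar n) (le_of_eq (sum_abs_ubar n)) (le_of_eq (sum_sq_ubar n))
    · intro i j _ _
      simp only [hPgdef, hGfdef]
    · intro i _
      exact (abs_sub _ _).trans (by linarith [hPgle (φ i) (φ i), hPgle (φ 0) (φ 1)])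
    · intro i j hi hj hne
      rcases lt_or_gt_of_ne hne with hlt | hgt
      · exact hPgnear i j 0 1 hlt hj one_pos h12n
      · have hsy := hPgnear j i 0 1 hgt hi one_pos h12n
        rwa [hPgsymm (φ j) (φ i)] at hsy
  have g4 : ∑ y : X, (∑ i ∈ range (2*n), ubar n i * Hf i y)^2
      ≤ N * (μ * (2*(n:ℝ))^2 + 2*(2*(n:ℝ))) := by
    refine gram_bound N hNpos (2*n) (ubar n) Hf (fun i j => Ph (φ i) (φ j))
      (Ph (φ 0) (φ 1)) μ (2*(n:ℝ)) (2*(n:ℝ)) hμ0 ?_ ?_ ?_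
      (sum_ubar n) (le_of_eq (sum_abs_ubar n)) (le_of_eq (sum_sq_ubar n))
    · intro i j _ _
      simp only [hPhdef, hHfdef]
    · intro i _
      exact (abs_sub _ _).trans (by linarith [hPhle (φ i) (φ i), hPhle (φ 0) (φ 1)])
    · intro i j hi hj hne
      rcases lt_or_gt_of_ne hne with hlt | hgt
      · exact hPhnear i j 0 1 hlt hj one_pos h12n
      · have hsy := hPhnear j i 0 1 hgt hi one_pos h12n
        rwa [hPhsymm (φ j) (φ i)] at hsy
  have g3 : ∑ y : X, (∑ j ∈ range (2*n), wbar n j * Gf j y)^2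
      ≤ N * (μ * (2*(n:ℝ)^2)^2 + 2*(2*((n:ℝ)^3 - n)/3)) := by
    refine gram_bound N hNpos (2*n) (wbar n) Gf (fun i j => Pg (φ i) (φ j))
      (Pg (φ 0) (φ 1)) μ (2*(n:ℝ)^2) (2*((n:ℝ)^3 - n)/3) hμ0 ?_ ?_ ?_
      (sum_wbar n) habs_w (le_of_eq (sum_sq_wbar n))
    · intro i j _ _
      simp only [hPgdef, hGfdef]
    · intro i _
      exact (abs_sub _ _).trans (by linarith [hPgle (φ i) (φ i), hPgle (φ 0) (φ 1)])
    · intro i j hi hj hne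
      rcases lt_or_gt_of_ne hne with hlt | hgt
      · exact hPgnear i j 0 1 hlt hj one_pos h12n
      · have hsy := hPgnear j i 0 1 hgt hi one_pos h12n
        rwa [hPgsymm (φ j) (φ i)] at hsy
  have g2 : ∑ y : X, (∑ j ∈ range (2*n), wbar n j * Hf j y)^2
      ≤ N * (μ * (2*(n:ℝ)^2)^2 + 2*(2*((n:ℝ)^3 - n)/3)) := by
    refine gram_bound N hNpos (2*n) (wbar n) Hf (fun i j => Ph (φ i) (φ j))
      (Ph (φ 0) (φ 1)) μ (2*(n:ℝ)^2) (2*((n:ℝ)^3 - n)/3) hμ0 ?_ ?_ ?_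
      (sum_wbar n) habs_w (le_of_eq (sum_sq_wbar n))
    · intro i j _ _
      simp only [hPhdef, hHfdef]
    · intro i _
      exact (abs_sub _ _).trans (by linarith [hPhle (φ i) (φ i), hPhle (φ 0) (φ 1)])
    · intro i j hi hj hne
      rcases lt_or_gt_of_ne hne with hlt | hgt
      · exact hPhnear i j 0 1 hlt hj one_pos h12n
      · have hsy := hPhnear j i 0 1 hgt hi one_pos h12n
        rwa [hPhsymm (φ j) (φ i)] at hsy
  -- abbreviations
  set Su : X → ℝ := fun y => ∑ i ∈ range (2*n), ubar n i * Gf i y with hSudef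
  set Tu : X → ℝ := fun y => ∑ i ∈ range (2*n), ubar n i * Hf i y with hTudef
  set Sw : X → ℝ := fun y => ∑ j ∈ range (2*n), wbar n j * Gf j y with hSwdef
  set Tw : X → ℝ := fun y => ∑ j ∈ range (2*n), wbar n j * Hf j y with hTwdef
  -- numeric simplification of gram bounds
  have hAu : μ * (2*(n:ℝ))^2 + 2*(2*(n:ℝ)) ≤ 8*(n:ℝ) := by
    have e : μ * (2*(n:ℝ))^2 = 4 := by
      rw [show μ * (2*(n:ℝ))^2 = 4*(μ*(n:ℝ)^2) from by ring, hμn2]; norm_num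
    rw [e]; linarith
  have hAw : μ * (2*(n:ℝ)^2)^2 + 2*(2*((n:ℝ)^3 - n)/3) ≤ 6*(n:ℝ)^3 := by
    have e : μ * (2*(n:ℝ)^2)^2 = 4*(n:ℝ)^2 := by
      rw [show μ * (2*(n:ℝ)^2)^2 = 4*(n:ℝ)^2*(μ*(n:ℝ)^2) from by ring, hμn2]; ring
    rw [e]
    nlinarith [mul_le_mul_of_nonneg_right hnR (sq_nonneg (n:ℝ)), hnpos]
  have hg1 : ∑ y : X, (Su y)^2 ≤ 8*(n:ℝ)*N :=
    g1.trans (by nlinarith [hNpos.le, hAu])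
  have hg4 : ∑ y : X, (Tu y)^2 ≤ 8*(n:ℝ)*N :=
    g4.trans (by nlinarith [hNpos.le, hAu])
  have hg3 : ∑ y : X, (Sw y)^2 ≤ 6*(n:ℝ)^3*N :=
    g3.trans (by nlinarith [hNpos.le, hAw])
  have hg2 : ∑ y : X, (Tw y)^2 ≤ 6*(n:ℝ)^3*N :=
    g2.trans (by nlinarith [hNpos.le, hAw])
  -- Cauchy-Schwarz
  have habsCS : ∀ (P Q : X → ℝ), (∑ y : X, (P y)^2 ≤ 8*(n:ℝ)*N) →
      (∑ y : X, (Q y)^2 ≤ 6*(n:ℝ)^3*N) → |∑ y : X, P y * Q y| ≤ 7*(n:ℝ)^2*N := by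
    intro P Q hP hQ
    have hcs := Finset.sum_mul_sq_le_sq_mul_sq Finset.univ P Q
    have nn1 : (0:ℝ) ≤ ∑ y : X, (P y)^2 := Finset.sum_nonneg fun y _ => sq_nonneg _
    have nn2 : (0:ℝ) ≤ ∑ y : X, (Q y)^2 := Finset.sum_nonneg fun y _ => sq_nonneg _
    have hprod : (∑ y : X, P y * Q y)^2 ≤ 48*(n:ℝ)^4*N^2 := by
      have := mul_le_mul hP hQ nn2 (by positivity : (0:ℝ) ≤ 8*(n:ℝ)*N)
      nlinarith [hcs]
    have h7 : (0:ℝ) ≤ 7*(n:ℝ)^2*N := by positivity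
    nlinarith [sq_abs (∑ y : X, P y * Q y), abs_nonneg (∑ y : X, P y * Q y), hprod, h7,
      sq_nonneg ((n:ℝ)^2*N)]
  have cs1 : |∑ y : X, Su y * Tw y| ≤ 7*(n:ℝ)^2*N := habsCS Su Tw hg1 hg2
  have cs2 : |∑ y : X, Sw y * Tu y| ≤ 7*(n:ℝ)^2*N := by
    have := habsCS Tu Sw hg4 hg3
    have e : ∑ y : X, Tu y * Sw y = ∑ y : X, Sw y * Tu y :=
      Finset.sum_congr rfl fun y _ => mul_comm _ _
    rwa [e] at this
  -- the main double sum
  set MAIN : ℝ := ∑ i ∈ range (2*n), ∑ j ∈ range (2*n), ubar n i * wbar n j * Dd i j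
    with hMAINdef
  have swap1 : ∑ i ∈ range (2*n), ∑ j ∈ range (2*n),
      ubar n i * wbar n j * (∑ y : X, Gf i y * Hf j y) = ∑ y : X, Su y * Tw y := by
    rw [bilinSwap]
  have swap2 : ∑ i ∈ range (2*n), ∑ j ∈ range (2*n),
      ubar n i * wbar n j * (∑ y : X, Gf j y * Hf i y) = ∑ y : X, Sw y * Tu y := by
    rw [Finset.sum_comm]
    have e : ∀ j ∈ range (2*n), ∀ i ∈ range (2*n),
        ubar n i * wbar n j * (∑ y : X, Gf j y * Hf i y)
        = wbar n j * ubar n i * (∑ y : X, Gf j y * Hf i y) := fun j _ i _ => by ring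
    rw [Finset.sum_congr rfl fun j hj => Finset.sum_congr rfl fun i hi => e j hj i hi]
    rw [bilinSwap]
  have expand : MAIN = (∑ y : X, Su y * Tw y)/N - (∑ y : X, Sw y * Tu y)/N := by
    rw [hMAINdef, ← swap1, ← swap2]
    simp only [Finset.sum_div]
    rw [← Finset.sum_sub_distrib]
    refine Finset.sum_congr rfl fun i _ => ?_
    rw [← Finset.sum_sub_distrib]
    refine Finset.sum_congr rfl fun j _ => ?_
    rw [hDdalt i j]
    ring
  have hup : |MAIN| ≤ 14*(n:ℝ)^2 := by
    rw [expand]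
    have t1 : |(∑ y : X, Su y * Tw y)/N - (∑ y : X, Sw y * Tu y)/N|
        ≤ |∑ y : X, Su y * Tw y|/N + |∑ y : X, Sw y * Tu y|/N := by
      calc |(∑ y : X, Su y * Tw y)/N - (∑ y : X, Sw y * Tu y)/N|
          ≤ |(∑ y : X, Su y * Tw y)/N| + |(∑ y : X, Sw y * Tu y)/N| := abs_sub _ _
        _ = |∑ y : X, Su y * Tw y|/N + |∑ y : X, Sw y * Tu y|/N := by
            rw [abs_div, abs_div, abs_of_pos hNpos]
    have d1 : |∑ y : X, Su y * Tw y|/N ≤ 7*(n:ℝ)^2 := by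
      rw [div_le_iff₀ hNpos]; linarith [cs1]
    have d2 : |∑ y : X, Sw y * Tu y|/N ≤ 7*(n:ℝ)^2 := by
      rw [div_le_iff₀ hNpos]; linarith [cs2]
    linarith
  -- lower bound
  have hStau : ∑ i ∈ range (2*n), ∑ j ∈ range (2*n), ubar n i * wbar n j * Tsgn i j
      = 2*((n:ℝ)^3 - n)/3 := by
    rw [Finset.sum_comm]
    have e1 : ∀ j ∈ range (2*n),
        (∑ i ∈ range (2*n), ubar n i * wbar n j * Tsgn i j) = wbar n j * tauexp n j := by
      intro j hj
      have e : ∀ i ∈ range (2*n), ubar n i * wbar n j * Tsgn i j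
          = wbar n j * (ubar n i * Tsgn i j) := fun i _ => by ring
      rw [Finset.sum_congr rfl e, ← Finset.mul_sum, Tsum n j (Finset.mem_range.mp hj)]
    rw [Finset.sum_congr rfl e1]
    have e2 : ∀ j ∈ range (2*n), wbar n j * tauexp n j
        = (wbar n j)^2 + (n:ℝ) * wbar n j := by
      intro j _
      have ht : tauexp n j = wbar n j + n := by rw [wbar]; ring
      rw [ht]; ring
    rw [Finset.sum_congr rfl e2, Finset.sum_add_distrib, ← Finset.mul_sum, sum_wbar,
      sum_sq_wbar, mul_zero, add_zero]
  have hdiff : MAIN - D₀ * (2*((n:ℝ)^3 - n)/3)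
      = ∑ i ∈ range (2*n), ∑ j ∈ range (2*n),
          ubar n i * wbar n j * (Dd i j - D₀ * Tsgn i j) := by
    rw [← hStau, hMAINdef, Finset.mul_sum, ← Finset.sum_sub_distrib]
    refine Finset.sum_congr rfl fun i _ => ?_
    rw [Finset.mul_sum, ← Finset.sum_sub_distrib]
    exact Finset.sum_congr rfl fun j _ => by ring
  have herr : |MAIN - D₀ * (2*((n:ℝ)^3 - n)/3)| ≤ 4*(n:ℝ) := by
    rw [hdiff]
    have hb := abs_double_sum_le (2*n)
      (fun i j => ubar n i * wbar n j * (Dd i j - D₀ * Tsgn i j))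
      (fun i j => |ubar n i| * |wbar n j| * μ)
      (by
        intro i hi j hj
        rw [abs_mul, abs_mul]
        exact mul_le_mul_of_nonneg_left
          (hTermBound i j (Finset.mem_range.mp hi) (Finset.mem_range.mp hj))
          (mul_nonneg (abs_nonneg _) (abs_nonneg _)))
    refine hb.trans ?_
    have eq1 : (∑ i ∈ range (2*n), ∑ j ∈ range (2*n), |ubar n i| * |wbar n j| * μ)
        = (∑ i ∈ range (2*n), |ubar n i|) * (∑ j ∈ range (2*n), |wbar n j|) * μ := by
      rw [Finset.sum_mul_sum (f := fun i => |ubar n i|) (g := fun j => |wbar n j|),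
        Finset.sum_mul]
      exact Finset.sum_congr rfl fun i _ => by rw [Finset.sum_mul]
    rw [eq1, sum_abs_ubar]
    have hstep : 2*(n:ℝ) * (∑ j ∈ range (2*n), |wbar n j|) * μ
        ≤ 2*(n:ℝ) * (2*(n:ℝ)^2) * μ := by
      have h0 : (0:ℝ) ≤ 2*(n:ℝ) := by positivity
      have := mul_le_mul_of_nonneg_left habs_w h0
      exact mul_le_mul_of_nonneg_right this hμ0
    refine hstep.trans ?_
    rw [show 2*(n:ℝ) * (2*(n:ℝ)^2) * μ = 4*(n:ℝ)*(μ*(n:ℝ)^2) from by ring, hμn2]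
    linarith
  have hS0 : (0:ℝ) ≤ 2*((n:ℝ)^3 - n)/3 := by nlinarith [hnR]
  have hlow : δ' * (2*((n:ℝ)^3 - n)/3) - 4*(n:ℝ) ≤ |MAIN| := by
    have h1 : |D₀ * (2*((n:ℝ)^3 - n)/3)| = |D₀| * (2*((n:ℝ)^3 - n)/3) := by
      rw [abs_mul, abs_of_nonneg hS0]
    have h2 : |D₀ * (2*((n:ℝ)^3 - n)/3)| - |MAIN| ≤ |MAIN - D₀ * (2*((n:ℝ)^3 - n)/3)| := by
      have := abs_sub_abs_le_abs_sub (D₀ * (2*((n:ℝ)^3 - n)/3)) MAIN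
      rw [abs_sub_comm] at this
      linarith
    have h3 : δ' * (2*((n:ℝ)^3 - n)/3) ≤ |D₀| * (2*((n:ℝ)^3 - n)/3) :=
      mul_le_mul_of_nonneg_right hD₀ hS0
    linarith [herr]
  -- final contradiction
  have h32 : 32*(n:ℝ)^2 ≤ δ'*(n:ℝ)^3 := by
    have := mul_le_mul_of_nonneg_left hδn (sq_nonneg (n:ℝ))
    nlinarith [this]
  have hd2n : δ'*(n:ℝ) ≤ 2*(n:ℝ) := mul_le_mul_of_nonneg_right hδ'le2 (by positivity)
  have hnsq : 4*(n:ℝ) ≤ (n:ℝ)^2 := by nlinarith [hnR, hnpos]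
  nlinarith [hup, hlow, h32, hd2n, hnsq, hnR, hnpos]
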